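/- Every free action of a finite group G on a compact metrizable zero-dimensional space X admits a clopen fundamental domain: there exists a clopen set V ⊆ X such that X is the disjoint union of the sets gV for g ∈ G. -/

import Mathlib

open scoped Pointwise

section Aux

variable {G X : Type*} [Group G] [MulAction G X]

/-- orbit saturation of a set -/
private def sat (G : Type*) {X : Type*} [Group G] [MulAction G X] (U : Set X) : Set X :=
  ⋃ g : G, g • U

private lemma subset_sat (U : Set X) : U ⊆ sat G U := by
  intro x hx
  exact Set.mem_iUnion.2 ⟨1, by simpa using hx⟩

private lemma smul_sat (g : G) (U : Set X) : g • sat G U = sat G U := by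
  unfold sat
  rw [Set.smul_set_iUnion]
  apply Set.Subset.antisymm
  · exact Set.iUnion_subset fun g' => by
      rw [smul_smul]; exact Set.subset_iUnion (fun h : G => h • U) (g * g')
  · exact Set.iUnion_subset fun g' => by
      refine Set.subset_iUnion_of_subset (g⁻¹ * g') ?_
      rw [smul_smul, mul_inv_cancel_left]

variable [TopologicalSpace X] [ContinuousConstSMul G X]

private lemma sat_clopen [Finite G] {U : Set X} (h : IsClopen U) : IsClopen (sat G U) :=
  isClopen_iUnion_of_finite fun g => ⟨h.isClosed.smul g, h.isOpen.smul g⟩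

/-- greedy construction of a fundamental domain from a list of small sets -/
private def build (G : Type*) {X : Type*} [Group G] [MulAction G X] :
    List (Set X) → Set X
  | [] => ∅
  | U :: rest => U ∪ (build G rest \ sat G U)

private lemma build_clopen [Finite G] :
    ∀ l : List (Set X), (∀ U ∈ l, IsClopen U) → IsClopen (build G l)
  | [], _ => isClopen_empty
  | U :: rest, h => by
    have hU : IsClopen U := h U List.mem_cons_self
    have hrest : IsClopen (build G rest) :=
      build_clopen rest fun W hW => h W (List.mem_cons_of_mem U hW)
    exact hU.union (hrest.diff (sat_clopen hU))

private lemma build_cover :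
    ∀ l : List (Set X), (⋃ U ∈ l, U) ⊆ sat G (build G l)
  | [] => by simp
  | U :: rest => by
    intro x hx
    simp only [List.mem_cons, Set.mem_iUnion] at hx
    by_cases hxU : x ∈ sat G U
    · rcases Set.mem_iUnion.1 hxU with ⟨g, hg⟩
      exact Set.mem_iUnion.2 ⟨g, Set.smul_set_mono Set.subset_union_left hg⟩
    · obtain ⟨W, hW, hxW⟩ := hx
      rcases hW with rfl | hW
      · exact absurd (subset_sat _ hxW) hxU
      · have : x ∈ sat G (build G rest) :=
          build_cover rest (Set.mem_iUnion₂.2 ⟨W, hW, hxW⟩)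
        rcases Set.mem_iUnion.1 this with ⟨g, y, hy, rfl⟩
        have hy' : y ∉ sat G U := by
          intro hy'
          apply hxU
          rw [← smul_sat g U]
          exact Set.smul_mem_smul_set hy'
        exact Set.mem_iUnion.2 ⟨g, Set.smul_mem_smul_set (Or.inr ⟨hy, hy'⟩)⟩

/-- the key disjointness property -/
private def SmallP (G : Type*) {X : Type*} [Group G] [MulAction G X] (V : Set X) : Prop :=
  ∀ g : G, g ≠ 1 → Disjoint (g • V) V

private lemma build_small :
    ∀ l : List (Set X), (∀ U ∈ l, SmallP G U) → SmallP G (build G l)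
  | [], _ => fun g _ => by simp [build]
  | U :: rest, h => by
    have hU : SmallP G U := h U List.mem_cons_self
    have hrest : SmallP G (build G rest) :=
      build_small rest fun W hW => h W (List.mem_cons_of_mem U hW)
    intro g hg
    rw [Set.disjoint_iff]
    rintro x ⟨hx1, hx2⟩
    rw [show build G (U :: rest) = U ∪ (build G rest \ sat G U) from rfl] at hx1 hx2
    rw [Set.smul_set_union, Set.smul_set_sdiff, smul_sat] at hx1
    rcases hx1 with h1 | ⟨h1, h1'⟩ <;> rcases hx2 with h2 | ⟨h2, h2'⟩
    · exact (hU g hg).le_bot ⟨h1, h2⟩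
    · exact h2' (Set.mem_iUnion.2 ⟨g, h1⟩)
    · exact h1' (subset_sat U h2)
    · exact (hrest g hg).le_bot ⟨h1, h2⟩

end Aux

theorem free_finite_action_fundamental_domain {G X : Type*} [Group G] [Finite G]
    [TopologicalSpace X] [CompactSpace X] [TopologicalSpace.MetrizableSpace X]
    [TotallyDisconnectedSpace X] [MulAction G X] [ContinuousConstSMul G X]
    (hfree : ∀ (g : G) (x : X), g • x = x → g = 1) :
    ∃ V : Set X, IsClopen V ∧ (⋃ g : G, g • V) = Set.univ ∧
      Pairwise fun g g' : G => Disjoint (g • V) (g' • V) := by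
  letI := TopologicalSpace.metrizableSpaceMetric X
  -- Step 1: for each x, find a clopen U ∋ x with SmallP
  have key : ∀ x : X, ∃ U : Set X, x ∈ U ∧ IsClopen U ∧ SmallP G U := by
    intro x
    have hC : ∀ g : G, ∃ C : Set X, x ∈ C ∧ IsClopen C ∧ (g ≠ 1 → Disjoint (g • C) C) := by
      intro g
      by_cases hg : g = 1
      · exact ⟨Set.univ, Set.mem_univ x, isClopen_univ, fun h => absurd hg h⟩
      · have hne : g • x ≠ x := fun h => hg (hfree g x h)
        obtain ⟨A, B, hA, hB, hgA, hxB, hAB⟩ := t2_separation hne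
        set N : Set X := B ∩ (fun y => g • y) ⁻¹' A with hN
        have hNopen : IsOpen N := hB.inter (hA.preimage (continuous_const_smul g))
        have hxN : x ∈ N := ⟨hxB, hgA⟩
        obtain ⟨C, ⟨hxC, hCcl⟩, hCN⟩ :=
          (nhds_basis_clopen x).mem_iff.1 (hNopen.mem_nhds hxN)
        refine ⟨C, hxC, hCcl, fun _ => Set.disjoint_left.2 ?_⟩
        rintro y ⟨z, hz, rfl⟩ hzy
        have h1 : g • z ∈ A := (hCN hz).2
        have h2 : g • z ∈ B := (hCN hzy).1
        exact hAB.le_bot ⟨h1, h2⟩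
    choose C hxC hCcl hCd using hC
    refine ⟨⋂ g : G, C g, Set.mem_iInter.2 hxC, isClopen_iInter_of_finite hCcl, ?_⟩
    intro g hg
    exact ((hCd g hg).mono (Set.smul_set_mono (Set.iInter_subset _ g))
      (Set.iInter_subset _ g))
  choose U hxU hUcl hUsmall using key
  -- Step 2: finite subcover
  obtain ⟨t, ht⟩ := isCompact_univ.elim_finite_subcover U (fun x => (hUcl x).isOpen)
    (fun x _ => Set.mem_iUnion.2 ⟨x, hxU x⟩)
  set l : List (Set X) := t.toList.map U with hl
  set V : Set X := build G l with hV
  have hmem : ∀ W ∈ l, ∃ x ∈ t, U x = W := by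
    intro W hW
    simp only [hl, List.mem_map, Finset.mem_toList] at hW
    exact hW
  refine ⟨V, build_clopen l ?_, ?_, ?_⟩
  · intro W hW; obtain ⟨x, _, rfl⟩ := hmem W hW; exact hUcl x
  · apply Set.eq_univ_of_univ_subset
    intro x hx
    have hx' : x ∈ ⋃ W ∈ l, W := by
      obtain ⟨y, hy⟩ := Set.mem_iUnion₂.1 (ht hx)
      exact Set.mem_iUnion₂.2 ⟨U y, by
        simp only [hl, List.mem_map, Finset.mem_toList]; exact ⟨⟨y, hy.1, rfl⟩, hy.2⟩⟩
    exact build_cover l hx'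
  · have hsmall : SmallP G V := build_small l fun W hW => by
      obtain ⟨x, _, rfl⟩ := hmem W hW; exact hUsmall x
    intro g g' hgg'
    have h := hsmall (g'⁻¹ * g) (by
      intro h; apply hgg'; rwa [inv_mul_eq_one, eq_comm] at h)
    have := (Set.disjoint_smul_set (a := g')).2 h
    rwa [smul_smul, mul_inv_cancel_left] at this
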